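/- Let p ≥ 7 be a prime with p-2 prime. Then the j-invariant j(E_p) = (16((p+2)^2-6p))^3 / (-64 p^2 (p-2)^2) has negative p-adic valuation and negative (p-2)-adic valuation, but nonnegative 2-adic valuation. -/

import Mathlib

lemma val_aux (r P Q A : ℕ) [hr : Fact r.Prime] (hP : P ≠ 0) (hQ : Q ≠ 0) (hA : A ≠ 0) :
    padicValRat r ((16 * (A : ℚ)) ^ 3 / (-64 * (P : ℚ) ^ 2 * (Q : ℚ) ^ 2)) =
      (3 * (padicValNat r 16 + padicValNat r A) : ℤ) -
        (padicValNat r 64 + 2 * padicValNat r P + 2 * padicValNat r Q) := by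
  have h1 : (16 * (A : ℚ)) ^ 3 = ((16 * A) ^ 3 : ℕ) := by push_cast; ring
  have h2 : -64 * (P : ℚ) ^ 2 * (Q : ℚ) ^ 2 = -((64 * P ^ 2 * Q ^ 2 : ℕ) : ℚ) := by
    push_cast; ring
  have hn : ((16 * A) ^ 3 : ℕ) ≠ 0 := by positivity
  have hd : ((64 * P ^ 2 * Q ^ 2 : ℕ)) ≠ 0 := by positivity
  rw [h1, h2, padicValRat.div (Nat.cast_ne_zero.mpr hn)
      (neg_ne_zero.mpr (Nat.cast_ne_zero.mpr hd)),
    padicValRat.neg, padicValRat.of_nat, padicValRat.of_nat,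
    padicValNat.pow (16 * A) 3,
    padicValNat.mul (by norm_num) hA,
    padicValNat.mul (by positivity) (by positivity),
    padicValNat.mul (by norm_num) (by positivity),
    padicValNat.pow P 2, padicValNat.pow Q 2]
  push_cast
  ring

/-- For a twin prime pair `(p, p-2)` with `p ≥ 7`, the `j`-invariant
`j(E_p) = (16((p+2)²-6p))³ / (-64 p² (p-2)²)` has negative `p`-adic and `(p-2)`-adic
valuation, but nonnegative `2`-adic valuation. -/
theorem j_invariant_valuations (p : ℕ) (hp : p.Prime) (hp7 : 7 ≤ p)
    (hp2 : Nat.Prime (p - 2)) :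
    padicValRat p ((16 * (((p : ℚ) + 2) ^ 2 - 6 * p)) ^ 3 /
        (-64 * (p : ℚ) ^ 2 * ((p : ℚ) - 2) ^ 2)) < 0 ∧
    padicValRat (p - 2) ((16 * (((p : ℚ) + 2) ^ 2 - 6 * p)) ^ 3 /
        (-64 * (p : ℚ) ^ 2 * ((p : ℚ) - 2) ^ 2)) < 0 ∧
    0 ≤ padicValRat 2 ((16 * (((p : ℚ) + 2) ^ 2 - 6 * p)) ^ 3 /
        (-64 * (p : ℚ) ^ 2 * ((p : ℚ) - 2) ^ 2)) := by
  haveI : Fact p.Prime := ⟨hp⟩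
  haveI : Fact (p - 2).Prime := ⟨hp2⟩
  haveI : Fact (Nat.Prime 2) := ⟨Nat.prime_two⟩
  set A : ℕ := p * (p - 2) + 4 with hA
  have h2p : 2 ≤ p := by omega
  have hcast : ((p : ℚ) - 2) = ((p - 2 : ℕ) : ℚ) := by
    push_cast [Nat.cast_sub h2p]; ring
  have hAcast : ((p : ℚ) + 2) ^ 2 - 6 * p = (A : ℚ) := by
    have : ((p - 2 : ℕ) : ℚ) = (p : ℚ) - 2 := by push_cast [Nat.cast_sub h2p]; ring
    push_cast [hA, this]; ring
  have hexpr : (16 * (((p : ℚ) + 2) ^ 2 - 6 * p)) ^ 3 /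
        (-64 * (p : ℚ) ^ 2 * ((p : ℚ) - 2) ^ 2) =
      (16 * (A : ℚ)) ^ 3 / (-64 * (p : ℚ) ^ 2 * ((p - 2 : ℕ) : ℚ) ^ 2) := by
    rw [hAcast, hcast]
  have hPne : p ≠ 0 := by omega
  have hQne : p - 2 ≠ 0 := by omega
  have hAne : A ≠ 0 := by omega
  have hpodd : ¬ (p ∣ 2) := fun h => by have := Nat.le_of_dvd (by norm_num) h; omega
  have hqodd : ¬ ((p - 2) ∣ 2) := fun h => by
    have := Nat.le_of_dvd (by norm_num) h; omega
  -- valuations at p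
  have vp16 : padicValNat p 16 = 0 := padicValNat.eq_zero_of_not_dvd (by
    intro h
    exact hpodd (hp.dvd_of_dvd_pow (show p ∣ 2 ^ 4 by norm_num at h ⊢; exact h)))
  have vp64 : padicValNat p 64 = 0 := padicValNat.eq_zero_of_not_dvd (by
    intro h
    exact hpodd (hp.dvd_of_dvd_pow (show p ∣ 2 ^ 6 by norm_num at h ⊢; exact h)))
  have vpA : padicValNat p A = 0 := padicValNat.eq_zero_of_not_dvd (by
    intro h
    have h4 : p ∣ 4 := (Nat.dvd_add_right (dvd_mul_right p (p - 2))).mp h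
    exact hpodd (hp.dvd_of_dvd_pow (show p ∣ 2 ^ 2 by norm_num; exact h4)))
  have vpq : padicValNat p (p - 2) = 0 := padicValNat.eq_zero_of_not_dvd (by
    intro h
    have := Nat.le_of_dvd (by omega) h; omega)
  have vpp : padicValNat p p = 1 := padicValNat.self hp.one_lt
  -- valuations at q = p - 2
  have vq16 : padicValNat (p - 2) 16 = 0 := padicValNat.eq_zero_of_not_dvd (by
    intro h
    have := Nat.le_of_dvd (by norm_num) (hp2.dvd_of_dvd_pow
      (show (p - 2) ∣ 2 ^ 4 by norm_num at h ⊢; exact h)); omega)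
  have vq64 : padicValNat (p - 2) 64 = 0 := padicValNat.eq_zero_of_not_dvd (by
    intro h
    have := Nat.le_of_dvd (by norm_num) (hp2.dvd_of_dvd_pow
      (show (p - 2) ∣ 2 ^ 6 by norm_num at h ⊢; exact h)); omega)
  have vqA : padicValNat (p - 2) A = 0 := padicValNat.eq_zero_of_not_dvd (by
    intro h
    have h4 : (p - 2) ∣ 4 := (Nat.dvd_add_right (dvd_mul_left (p - 2) p)).mp h
    have := Nat.le_of_dvd (by norm_num) h4; omega)
  have vqp : padicValNat (p - 2) p = 0 := padicValNat.eq_zero_of_not_dvd (by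
    intro h
    rcases (Nat.Prime.eq_one_or_self_of_dvd hp _ h) with h1 | h1 <;> omega)
  have vqq : padicValNat (p - 2) (p - 2) = 1 := padicValNat.self hp2.one_lt
  -- valuations at 2
  have hpodd' : Odd p := hp.odd_of_ne_two (by omega)
  have hqodd' : Odd (p - 2) := hp2.odd_of_ne_two (by omega)
  have v216 : padicValNat 2 16 = 4 := by
    have : (16 : ℕ) = 2 ^ 4 := by norm_num
    rw [this, padicValNat.prime_pow]
  have v264 : padicValNat 2 64 = 6 := by
    have : (64 : ℕ) = 2 ^ 6 := by norm_num
    rw [this, padicValNat.prime_pow]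
  have hAodd : Odd A := (hpodd'.mul hqodd').add_even ⟨2, rfl⟩
  have v2A : padicValNat 2 A = 0 := padicValNat.eq_zero_of_not_dvd (by
    rcases hAodd with ⟨k, hk⟩; omega)
  have v2p : padicValNat 2 p = 0 := padicValNat.eq_zero_of_not_dvd (by
    rcases hpodd' with ⟨k, hk⟩; omega)
  have v2q : padicValNat 2 (p - 2) = 0 := padicValNat.eq_zero_of_not_dvd (by
    rcases hqodd' with ⟨k, hk⟩; omega)
  refine ⟨?_, ?_, ?_⟩
  · rw [hexpr, val_aux p p (p - 2) A hPne hQne hAne, vp16, vpA, vp64, vpp, vpq]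
    norm_num
  · rw [hexpr, val_aux (p - 2) p (p - 2) A hPne hQne hAne, vq16, vqA, vq64, vqp, vqq]
    norm_num
  · rw [hexpr, val_aux 2 p (p - 2) A hPne hQne hAne, v216, v2A, v264, v2p, v2q]
    norm_num
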